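/- Let C be a conjugation on a complex Hilbert space H. Define φ : B(H) → B(H ⊕ H) by φ(X) = X ⊕ (−C X* C) (block-diagonal operator). Then φ is an injective Lie algebra homomorphism (φ([X,Y]) = [φ(X), φ(Y)]) and is isometric (‖φ(X)‖ = ‖X‖). Moreover, each φ(X) is skew-symmetric with respect to the conjugation D on H ⊕ H given by D(x, y) = (C y, C x). -/

import Mathlib

open scoped InnerProductSpace

theorem phi_lie_embedding {H : Type*} [NormedAddCommGroup H]
    [InnerProductSpace ℂ H] [CompleteSpace H]
    (C : H →SL[starRingEnd ℂ] H)
    (hinv : ∀ x, C (C x) = x)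
    (hC : ∀ x y, ⟪C x, C y⟫_ℂ = ⟪y, x⟫_ℂ)
    (eL : WithLp 2 (H × H) ≃L[ℂ] H × H)
    (heL : eL = WithLp.prodContinuousLinearEquiv 2 ℂ H H)
    (φ : (H →L[ℂ] H) → (WithLp 2 (H × H) →L[ℂ] WithLp 2 (H × H)))
    (hφ : ∀ X : H →L[ℂ] H,
      φ X = (eL.symm : H × H →L[ℂ] WithLp 2 (H × H)).comp
        ((X.prodMap (-(C.comp ((ContinuousLinearMap.adjoint X).comp C)))).comp
          (eL : WithLp 2 (H × H) →L[ℂ] H × H)))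
    (D : WithLp 2 (H × H) → WithLp 2 (H × H))
    (hD : ∀ p, D p = eL.symm (C (eL p).2, C (eL p).1)) :
    (∀ X Y : H →L[ℂ] H, φ (X * Y - Y * X) = φ X * φ Y - φ Y * φ X) ∧
    Function.Injective φ ∧
    (∀ X : H →L[ℂ] H, ‖φ X‖ = ‖X‖) ∧
    (∀ (X : H →L[ℂ] H) (p : WithLp 2 (H × H)),
      D ((φ X) (D p)) = -(ContinuousLinearMap.adjoint (φ X)) p) := by
  have hφ' : ∀ (X : H →L[ℂ] H) (p : WithLp 2 (H × H)),
      φ X p = eL.symm (X (eL p).1,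
        -(C ((ContinuousLinearMap.adjoint X) (C (eL p).2)))) := by
    intro X p
    rw [hφ]
    simp [Prod.map]
  have happ : ∀ a : H × H, eL (eL.symm a) = a := fun a => eL.apply_symm_apply a
  refine ⟨?_, ?_, ?_, ?_⟩
  · intro X Y
    ext p
    rw [ContinuousLinearMap.sub_apply, ContinuousLinearMap.mul_apply,
      ContinuousLinearMap.mul_apply, hφ', hφ', hφ', hφ', hφ']
    apply eL.injective
    simp only [map_sub, happ, ContinuousLinearMap.mul_def, ContinuousLinearMap.adjoint_comp,
      ContinuousLinearMap.comp_apply, ContinuousLinearMap.sub_apply, map_neg, hinv, neg_neg]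
    rw [Prod.ext_iff]
    constructor <;> simp <;> abel
  · intro X Y h
    ext x
    have h2 := congrArg (fun f => (eL (f (eL.symm (x, 0)))).1) h
    simpa [hφ', happ] using h2
  · intro X
    have hCn : ∀ x, ‖C x‖ = ‖x‖ := by
      intro x
      rw [norm_eq_sqrt_re_inner (𝕜 := ℂ) (C x), norm_eq_sqrt_re_inner (𝕜 := ℂ) x, hC]
    have hadjn : ‖ContinuousLinearMap.adjoint X‖ = ‖X‖ :=
      ContinuousLinearMap.adjoint.norm_map X
    have key : ∀ p : WithLp 2 (H × H), ‖φ X p‖ ^ 2 =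
        ‖X (eL p).1‖ ^ 2 + ‖(ContinuousLinearMap.adjoint X) (C (eL p).2)‖ ^ 2 := by
      intro p
      rw [hφ' X p, WithLp.prod_norm_sq_eq_of_L2]
      simp [heL, hCn]
    have hnp : ∀ p : WithLp 2 (H × H), ‖p‖ ^ 2 = ‖(eL p).1‖ ^ 2 + ‖(eL p).2‖ ^ 2 := by
      intro p
      rw [WithLp.prod_norm_sq_eq_of_L2]
      simp [heL]
    apply le_antisymm
    · apply ContinuousLinearMap.opNorm_le_bound _ (norm_nonneg X)
      intro p
      have h2 : ‖φ X p‖ ^ 2 ≤ (‖X‖ * ‖p‖) ^ 2 := by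
        rw [key p]
        have e1 : ‖X (eL p).1‖ ≤ ‖X‖ * ‖(eL p).1‖ := X.le_opNorm _
        have e2 : ‖(ContinuousLinearMap.adjoint X) (C (eL p).2)‖ ≤ ‖X‖ * ‖(eL p).2‖ := by
          calc ‖(ContinuousLinearMap.adjoint X) (C (eL p).2)‖
              ≤ ‖ContinuousLinearMap.adjoint X‖ * ‖C (eL p).2‖ :=
                (ContinuousLinearMap.adjoint X).le_opNorm _
            _ = ‖X‖ * ‖(eL p).2‖ := by rw [hCn, hadjn]
        calc ‖X (eL p).1‖ ^ 2 + ‖(ContinuousLinearMap.adjoint X) (C (eL p).2)‖ ^ 2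
            ≤ (‖X‖ * ‖(eL p).1‖) ^ 2 + (‖X‖ * ‖(eL p).2‖) ^ 2 := by
              exact add_le_add (pow_le_pow_left₀ (norm_nonneg _) e1 2)
                (pow_le_pow_left₀ (norm_nonneg _) e2 2)
          _ = (‖X‖ * ‖p‖) ^ 2 := by rw [mul_pow, mul_pow, mul_pow, hnp p]; ring
      have := Real.sqrt_le_sqrt h2
      rwa [Real.sqrt_sq (norm_nonneg _),
        Real.sqrt_sq (mul_nonneg (norm_nonneg _) (norm_nonneg _))] at this
    · apply ContinuousLinearMap.opNorm_le_bound _ (norm_nonneg _)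
      intro x
      have h1 : ‖X x‖ = ‖φ X (eL.symm (x, 0))‖ := by
        have hk := key (eL.symm (x, 0))
        rw [happ] at hk
        simp only [map_zero] at hk
        have hk' : ‖φ X (eL.symm (x, 0))‖ ^ 2 = ‖X x‖ ^ 2 := by simpa using hk
        have := congrArg Real.sqrt hk'
        rwa [Real.sqrt_sq (norm_nonneg _), Real.sqrt_sq (norm_nonneg _), eq_comm] at this
      have h2 : ‖eL.symm (x, 0)‖ = ‖x‖ := by
        simp [heL, WithLp.norm_toLp_fst]
      calc ‖X x‖ = ‖φ X (eL.symm (x, 0))‖ := h1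
        _ ≤ ‖φ X‖ * ‖eL.symm (x, 0)‖ := (φ X).le_opNorm _
        _ = ‖φ X‖ * ‖x‖ := by rw [h2]
  · intro X p
    have key2 : ∀ a b : H, ⟪C (X (C a)), b⟫_ℂ
        = ⟪a, C ((ContinuousLinearMap.adjoint X) (C b))⟫_ℂ := by
      intro a b
      conv_lhs => rw [← hinv b]
      rw [hC, ← ContinuousLinearMap.adjoint_inner_left]
      conv_rhs => rw [← hinv a]
      rw [hC]
    apply ext_inner_right ℂ
    intro q
    rw [inner_neg_left, ContinuousLinearMap.adjoint_inner_left]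
    simp only [hD, hφ', happ, hinv, map_neg]
    simp only [heL, WithLp.prod_inner_apply, WithLp.prodContinuousLinearEquiv_apply,
      WithLp.prodContinuousLinearEquiv_symm_apply, WithLp.toLp_fst, WithLp.toLp_snd, WithLp.ofLp_fst, WithLp.ofLp_snd,
      inner_neg_left, inner_neg_right, ContinuousLinearMap.adjoint_inner_left, key2]
    ring
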